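/- Let x, y ∈ ℝ² with |x| > 1 and |y| ≥ 1, and let R > 0 be such that |x − y| ≤ R. Then x ≠ y* and |x − y| / |x − y*| ≤ max(2, 2R) ≤ 2(1 + R). -/

import Mathlib

open MeasureTheory

noncomputable section

abbrev E2 : Type := EuclideanSpace ℝ (Fin 2)

/-- The planar Biot–Savart kernel `K(z) = z⊥ / (2π|z|²)`, where `z⊥ = (-z₂, z₁)`.
(With the junk-value convention `(0 : ℝ)⁻¹ = 0`, this gives `K 0 = 0`.) -/
def K (z : E2) : E2 :=
  (2 * Real.pi * ‖z‖ ^ 2)⁻¹ • (WithLp.equiv 2 (Fin 2 → ℝ)).symm ![-(z 1), z 0]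

/-- For `|x| > 1`, `|y| ≥ 1` and `|x − y| ≤ R`, the ratio `|x − y|/|x − y*|` is at most
`max(2, 2R) ≤ 2(1 + R)`, where `y* = y/|y|²` is the inversion in the unit circle. -/
theorem inversion_distance_ratio_bound (x y : E2) (hx : 1 < ‖x‖) (hy : 1 ≤ ‖y‖)
    (R : ℝ) (hR : 0 < R) (hxy : ‖x - y‖ ≤ R) :
    x ≠ (‖y‖ ^ 2)⁻¹ • y ∧
    ‖x - y‖ / ‖x - (‖y‖ ^ 2)⁻¹ • y‖ ≤ max 2 (2 * R) ∧
    max 2 (2 * R) ≤ 2 * (1 + R) := by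
  have hny : (0:ℝ) < ‖y‖ := lt_of_lt_of_le one_pos hy
  have hstar : ‖(‖y‖ ^ 2)⁻¹ • y‖ = ‖y‖⁻¹ := by
    rw [norm_smul, Real.norm_eq_abs, abs_inv, abs_pow, abs_norm]
    field_simp
  have hstar1 : ‖(‖y‖ ^ 2)⁻¹ • y‖ ≤ 1 := by
    rw [hstar]
    exact inv_le_one_of_one_le₀ hy
  have hne : x ≠ (‖y‖ ^ 2)⁻¹ • y := by
    intro h
    rw [h] at hx
    exact absurd (lt_of_lt_of_le hx hstar1) (by norm_num)
  have hdpos : 0 < ‖x - (‖y‖ ^ 2)⁻¹ • y‖ := by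
    rw [norm_pos_iff, sub_ne_zero]
    exact hne
  set d := ‖x - (‖y‖ ^ 2)⁻¹ • y‖ with hd
  have hdl : ‖x‖ - ‖y‖⁻¹ ≤ d := by
    have := norm_sub_norm_le x ((‖y‖ ^ 2)⁻¹ • y)
    rw [hstar] at this
    linarith [le_abs_self (‖x‖ - ‖y‖⁻¹), this.trans (le_refl d),
      (abs_sub_abs_le_abs_sub ‖x‖ ‖y‖⁻¹)]
  have hmax : max 2 (2 * R) ≤ 2 * (1 + R) := by
    apply max_le <;> linarith
  refine ⟨hne, ?_, hmax⟩
  rw [div_le_iff₀ hdpos]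
  -- key identity
  have key : d ^ 2 * ‖y‖ ^ 2 = ‖x - y‖ ^ 2 + (‖x‖ ^ 2 - 1) * (‖y‖ ^ 2 - 1) := by
    have e1 : d ^ 2 = ‖x‖ ^ 2 - 2 * ((‖y‖ ^ 2)⁻¹ * (inner ℝ x y : ℝ)) + ((‖y‖ ^ 2)⁻¹) ^ 2 * ‖y‖ ^ 2 := by
      rw [hd, @norm_sub_sq_real, real_inner_smul_right, norm_smul, Real.norm_eq_abs,
        abs_inv, abs_pow, abs_norm, mul_pow]
    have e2 : ‖x - y‖ ^ 2 = ‖x‖ ^ 2 - 2 * (inner ℝ x y : ℝ) + ‖y‖ ^ 2 := norm_sub_sq_real x y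
    have hy2 : (‖y‖:ℝ) ^ 2 ≠ 0 := by positivity
    rw [e1, e2]
    field_simp
    ring
  have hnxy : 0 ≤ ‖x - y‖ := norm_nonneg _
  rcases le_total ‖y‖ 2 with h2 | h2
  · -- ‖x - y‖ ≤ ‖y‖ * d ≤ 2 * d
    have hsq : ‖x - y‖ ^ 2 ≤ (d * ‖y‖) ^ 2 := by
      have h1 : (0:ℝ) ≤ ‖x‖ ^ 2 - 1 := by nlinarith
      have h2' : (0:ℝ) ≤ ‖y‖ ^ 2 - 1 := by nlinarith
      nlinarith [mul_nonneg h1 h2']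
    have h3 : ‖x - y‖ ≤ d * ‖y‖ := by
      nlinarith [norm_nonneg (x - y), mul_nonneg hdpos.le hny.le]
    calc ‖x - y‖ ≤ d * ‖y‖ := h3
      _ ≤ 2 * d := by nlinarith
      _ ≤ max 2 (2 * R) * d := by
          apply mul_le_mul_of_nonneg_right (le_max_left _ _) hdpos.le
  · -- d ≥ 1/2
    have hinv : ‖y‖⁻¹ ≤ 1 / 2 := by
      rw [inv_le_iff_one_le_mul₀ hny]; nlinarith
    have hd2 : (1:ℝ) / 2 ≤ d := by linarith
    calc ‖x - y‖ ≤ R := hxy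
      _ ≤ 2 * R * d := by nlinarith
      _ ≤ max 2 (2 * R) * d := by
          apply mul_le_mul_of_nonneg_right (le_max_right _ _) hdpos.le
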